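/- For every natural number h, there exists a finite simple graph G on a nonempty vertex set such that every vertex of G has degree exactly 3 and the girth of G is at least h. -/

import Mathlib

namespace ErdosSachs

inductive Letter : Type
  | A | A' | B
deriving DecidableEq

open Letter

def Bad : Letter → Letter → Prop
  | .A, .A' => True
  | .A', .A => True
  | .B, .B => True
  | _, _ => False

instance : ∀ x y, Decidable (Bad x y) := by
  intro x y; cases x <;> cases y <;> simp only [Bad] <;> infer_instance

def intm : Letter → Matrix (Fin 2) (Fin 2) ℤ
  | A => !![1, 3; 0, 1]
  | A' => !![1, -3; 0, 1]
  | B => !![0, 1; 1, 0]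

def act : Letter → ℤ × ℤ → ℤ × ℤ
  | A, p => (p.1 + 3 * p.2, p.2)
  | A', p => (p.1 - 3 * p.2, p.2)
  | B, p => (p.2, p.1)

def Fv (l : List Letter) : ℤ × ℤ := l.foldr act (0, 1)

def Stat : Letter → ℤ × ℤ → Prop
  | B, p => p.1 ^ 2 < p.2 ^ 2
  | A, p => p.2 ^ 2 < p.1 ^ 2 ∧ 1 ≤ p.1 * p.2
  | A', p => p.2 ^ 2 < p.1 ^ 2 ∧ p.1 * p.2 ≤ -1

lemma stat_step (x y : Letter) (v : ℤ × ℤ) (hb : ¬ Bad x y) (hs : Stat y v) :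
    Stat x (act x v) := by
  obtain ⟨a, b⟩ := v
  cases x <;> cases y <;> simp only [Bad, not_true, not_false_iff] at hb <;>
    simp only [Stat, act] at hs ⊢ <;>
    try exact hb.elim
  all_goals try obtain ⟨h1, h2⟩ := hs
  all_goals try constructor
  all_goals nlinarith [sq_nonneg (a + b), sq_nonneg (a - b), sq_nonneg a, sq_nonneg b,
      sq_nonneg (a + 3 * b), sq_nonneg (a - 3 * b)]


lemma stat_run (l : List Letter) : l.Chain' (fun x y => ¬ Bad x y) →
    l.getLast? ≠ some B → Stat (l.headD B) (Fv l) := by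
  induction l with
  | nil => intro _ _; simp [Fv, Stat]
  | cons x t ih =>
    intro hc hl
    obtain ⟨hhead, hc'⟩ := List.isChain_cons.mp hc
    have hstep : Fv (x :: t) = act x (Fv t) := rfl
    cases t with
    | nil =>
      have hxB : x ≠ B := by simpa using hl
      have hB : Stat B (Fv ([] : List Letter)) := by simp [Fv, Stat]
      have hb : ¬ Bad x B := by cases x <;> simp [Bad] <;> simp_all
      simpa [hstep] using stat_step x B (Fv []) hb hB
    | cons y t' =>
      have hl' : (y :: t').getLast? ≠ some B := by
        rwa [List.getLast?_cons_cons] at hl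
      have ht := ih hc' hl'
      have hb : ¬ Bad x y := hhead y rfl
      simpa [hstep] using stat_step x y (Fv (y :: t')) hb ht

lemma Fv_bound (l : List Letter) :
    |(Fv l).1| ≤ 4 ^ l.length ∧ |(Fv l).2| ≤ 4 ^ l.length := by
  induction l with
  | nil => simp [Fv]
  | cons x t ih =>
    obtain ⟨h1, h2⟩ := ih
    have hstep : Fv (x :: t) = act x (Fv t) := rfl
    have ha := abs_add_le (Fv t).1 (3 * (Fv t).2)
    have ha' := abs_sub (Fv t).1 (3 * (Fv t).2)
    have hm : |3 * (Fv t).2| = 3 * |(Fv t).2| := by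
      rw [abs_mul]; norm_num
    have hp : (0:ℤ) ≤ 4 ^ t.length := by positivity
    cases x <;> rw [hstep] <;> constructor <;>
      simp only [act, List.length_cons, pow_succ] <;> linarith

lemma prod_entries (l : List Letter) :
    ((l.map intm).prod) 0 1 = (Fv l).1 ∧ ((l.map intm).prod) 1 1 = (Fv l).2 := by
  induction l with
  | nil => simp [Fv, Matrix.one_apply]
  | cons x t ih =>
    obtain ⟨h1, h2⟩ := ih
    have hstep : Fv (x :: t) = act x (Fv t) := rfl
    cases x <;>
      simp [hstep, act, List.map_cons, List.prod_cons, Matrix.mul_apply, Fin.sum_univ_two, intm,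
        h1, h2] <;> ring

lemma pow_A (L : ℕ) : (intm A) ^ L = !![1, 3 * (L : ℤ); 0, 1] := by
  induction L with
  | zero => simp [Matrix.one_fin_two]
  | succ k ih =>
    rw [pow_succ, ih, intm, Matrix.mul_fin_two]
    push_cast
    congr 1 <;> ring_nf

lemma pow_A' (L : ℕ) : (intm A') ^ L = !![1, -3 * (L : ℤ); 0, 1] := by
  induction L with
  | zero => simp [Matrix.one_fin_two]
  | succ k ih =>
    rw [pow_succ, ih, intm, Matrix.mul_fin_two]
    push_cast
    congr 1 <;> ring_nf


def φn (n : ℕ) : Matrix (Fin 2) (Fin 2) ℤ →+* Matrix (Fin 2) (Fin 2) (ZMod n) :=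
  (Int.castRingHom (ZMod n)).mapMatrix

lemma φn_apply (n : ℕ) (M : Matrix (Fin 2) (Fin 2) ℤ) (i j : Fin 2) :
    φn n M i j = ((M i j : ℤ) : ZMod n) := rfl

lemma three_mul_lt (L : ℕ) (hL : 1 ≤ L) : 3 * L < 4 ^ L := by
  induction L with
  | zero => omega
  | succ k ih =>
    rcases Nat.eq_or_lt_of_le hL with hk | hk
    · simp [← hk]
    · have hk1 : 1 ≤ k := by omega
      have := ih hk1
      have h4 : (1:ℕ) ≤ 4 ^ k := Nat.one_le_pow _ _ (by norm_num)
      calc 3 * (k + 1) = 3 * k + 3 := by ring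
        _ < 4 ^ k + 3 * 4 ^ k := by omega
        _ = 4 ^ (k + 1) := by ring

lemma mul_BB : intm B * intm B = 1 := by
  simp [intm, Matrix.mul_fin_two, Matrix.one_fin_two]

lemma core (n L : ℕ) (hL : 3 ≤ L) (hn : 4 ^ L < n)
    (c : ℕ → Letter) (hper : ∀ i, c (i + L) = c i)
    (hred : ∀ i, ¬ Bad (c i) (c (i + 1)))
    (hprod : φn n (((List.range L).map (fun j => intm (c j))).prod) = 1) : False := by
  by_cases hB : ∃ i, i < L ∧ c i = B
  · -- there is a B letter
    obtain ⟨i, hiL, hiB⟩ := hB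
    set t := i + 1 with ht
    have htL : t ≤ L := hiL
    set d : ℕ → Letter := fun j => c (t + j) with hd
    -- rotate the product
    have hsplit : L = t + (L - t) := by omega
    have h1 : ((List.range L).map (fun j => intm (c j))).prod =
        ((List.range t).map (fun j => intm (c j))).prod *
        ((List.range (L - t)).map (fun j => intm (d j))).prod := by
      conv_lhs => rw [hsplit, List.range_add]
      rw [List.map_append, List.prod_append, List.map_map]
      rfl
    set Q := ((List.range t).map (fun j => intm (c j))).prod with hQ
    set R := ((List.range (L - t)).map (fun j => intm (d j))).prod with hR
    have h2 : φn n R * φn n Q = 1 := by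
      rw [mul_eq_one_comm, ← map_mul, ← h1, hprod]
    -- rotated word
    have hdL : ∀ j, c j = d (L - t + j) := by
      intro j
      have : t + (L - t + j) = j + L := by omega
      rw [hd]; simp only [this, hper j]
    have h3 : R * Q = ((List.range L).map (fun j => intm (d j))).prod := by
      conv_rhs => rw [hsplit]
      rw [Nat.add_comm t (L - t), List.range_add, List.map_append, List.prod_append,
        List.map_map]
      congr 1
      rw [hQ]
      congr 1
      apply List.map_congr_left
      intro j _
      simp only [Function.comp_apply]
      rw [hdL j]
    -- peel off the last letter, which is B
    have hdlast : d (L - 1) = B := by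
      have : t + (L - 1) = i + L := by omega
      rw [hd]; simp only [this, hper i, hiB]
    have h4 : ((List.range L).map (fun j => intm (d j))).prod =
        ((List.range (L - 1)).map (fun j => intm (d j))).prod * intm B := by
      have : L = (L - 1) + 1 := by omega
      conv_lhs => rw [this, List.range_succ]
      rw [List.map_append, List.prod_append]
      simp [hdlast]
    set u : List Letter := (List.range (L - 1)).map d with hu
    have hul : u.length = L - 1 := by simp [hu]
    have hPu : ((List.range (L - 1)).map (fun j => intm (d j))).prod = (u.map intm).prod := by
      rw [hu, List.map_map]; rfl
    -- φ of Pu equals φ of B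
    have h5 : φn n ((u.map intm).prod) * φn n (intm B) = 1 := by
      rw [← map_mul, ← hPu, ← h4, ← h3, map_mul, h2]
    have h6 : φn n ((u.map intm).prod) = φn n (intm B) := by
      have hb2 : φn n (intm B) * φn n (intm B) = 1 := by
        rw [← map_mul, mul_BB, map_one]
      calc φn n ((u.map intm).prod)
          = φn n ((u.map intm).prod) * (φn n (intm B) * φn n (intm B)) := by rw [hb2, mul_one]
        _ = (φn n ((u.map intm).prod) * φn n (intm B)) * φn n (intm B) := by rw [mul_assoc]
        _ = φn n (intm B) := by rw [h5, one_mul]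
    -- chain properties of u
    have hchain : u.Chain' (fun x y => ¬ Bad x y) := by
      rw [hu]
      rcases Nat.exists_eq_add_of_le (show 1 ≤ L - 1 by omega) with ⟨m, hm⟩
      rw [hm]
      unfold List.Chain'
      rw [List.isChain_map]
      rw [show 1 + m = m + 1 by omega, List.isChain_range_succ]
      intro k _
      simpa [hd, Nat.add_assoc] using hred (t + k)
    -- head and last of u
    have hheadu : u.headD B = d 0 := by
      rw [hu, show L - 1 = (L - 2) + 1 by omega, List.range_succ_eq_map]
      simp
    have hd0 : d 0 ≠ B := by
      intro hEq
      apply hred i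
      have : c (i + 1) = B := by rw [← hEq, hd]
      rw [hiB, this]
      simp [Bad]
    have hlastu : u.getLast? = some (d (L - 2)) := by
      rw [hu, show L - 1 = (L - 2) + 1 by omega, List.range_succ, List.map_append]
      simp
    have hdl2 : d (L - 2) ≠ B := by
      intro hEq
      apply hred (t + (L - 2))
      have e1 : c (t + (L - 2)) = B := by rw [← hEq, hd]
      have e2 : c (t + (L - 2) + 1) = B := by
        have : t + (L - 2) + 1 = t + (L - 1) := by omega
        rw [this, ← hdlast, hd]
      rw [e1, e2]
      simp [Bad]
    have hstat := stat_run u hchain (by rw [hlastu]; simpa using hdl2)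
    rw [hheadu] at hstat
    have hy : (Fv u).2 ≠ 0 := by
      cases hcase : d 0 with
      | A =>
        rw [hcase] at hstat
        obtain ⟨_, h2'⟩ := hstat
        intro h0; rw [h0, mul_zero] at h2'; omega
      | A' =>
        rw [hcase] at hstat
        obtain ⟨_, h2'⟩ := hstat
        intro h0; rw [h0, mul_zero] at h2'; omega
      | B => exact absurd hcase hd0
    have hent : ((u.map intm).prod) 1 1 = (Fv u).2 := (prod_entries u).2
    have h7 : (((Fv u).2 : ℤ) : ZMod n) = 0 := by
      have h7' : φn n ((u.map intm).prod) 1 1 = φn n (intm B) 1 1 := by rw [h6]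
      rw [φn_apply, φn_apply, hent] at h7'
      have : (intm B) 1 1 = 0 := by simp [intm]
      rw [this] at h7'
      simpa using h7'
    have hdvd : (n : ℤ) ∣ (Fv u).2 := by
      rwa [ZMod.intCast_zmod_eq_zero_iff_dvd] at h7
    have hyb : |(Fv u).2| ≤ 4 ^ (L - 1) := by
      have := (Fv_bound u).2
      rwa [hul] at this
    have hnle : (n : ℤ) ≤ |(Fv u).2| := Int.le_of_dvd (abs_pos.mpr hy) ((dvd_abs _ _).mpr hdvd)
    have hlt : ((4:ℤ) ^ (L - 1)) < n := by
      have h1' : (4:ℕ) ^ (L - 1) ≤ 4 ^ L := Nat.pow_le_pow_right (by norm_num) (by omega)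
      have : (4:ℕ) ^ (L - 1) < n := by omega
      exact_mod_cast this
    linarith
  · push_neg at hB
    have h0L : 0 < L := by omega
    have hc0 : c 0 ≠ B := hB 0 h0L
    have hall : ∀ j, j < L → c j = c 0 := by
      intro j
      induction j with
      | zero => intro _; rfl
      | succ k ih =>
        intro hkL
        have hk : k < L := by omega
        have hck := ih hk
        have hnb := hred k
        have hkB := hB (k + 1) hkL
        rw [hck] at hnb
        cases e0 : c 0 <;> cases e1 : c (k + 1) <;> simp_all [Bad]
    have hrep : (List.range L).map (fun j => intm (c j)) = List.replicate L (intm (c 0)) := by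
      refine List.eq_replicate_iff.mpr ⟨by simp, ?_⟩
      intro b hb
      simp only [List.mem_map, List.mem_range] at hb
      obtain ⟨j, hj, rfl⟩ := hb
      rw [hall j hj]
    rw [hrep, List.prod_replicate] at hprod
    have hdvd3 : n ∣ 3 * L := by
      cases e0 : c 0 with
      | B => exact absurd e0 hc0
      | A =>
        rw [e0, pow_A] at hprod
        have h7' : (((!![1, 3 * (L:ℤ); 0, 1] : Matrix (Fin 2) (Fin 2) ℤ) 0 1 : ℤ) : ZMod n) = 0 := by
          rw [← φn_apply, hprod, Matrix.one_apply_ne (by decide)]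
        have hdd := (ZMod.intCast_zmod_eq_zero_iff_dvd _ _).mp h7'
        have he : (!![1, 3 * (L:ℤ); 0, 1] : Matrix (Fin 2) (Fin 2) ℤ) 0 1 = 3 * (L:ℤ) := by simp
        rw [he] at hdd
        exact_mod_cast hdd
      | A' =>
        rw [e0, pow_A'] at hprod
        have h7' : (((!![1, -3 * (L:ℤ); 0, 1] : Matrix (Fin 2) (Fin 2) ℤ) 0 1 : ℤ) : ZMod n) = 0 := by
          rw [← φn_apply, hprod, Matrix.one_apply_ne (by decide)]
        have hdd := (ZMod.intCast_zmod_eq_zero_iff_dvd _ _).mp h7'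
        have he : (!![1, -3 * (L:ℤ); 0, 1] : Matrix (Fin 2) (Fin 2) ℤ) 0 1 = -(3 * (L:ℤ)) := by
          simp
        rw [he, dvd_neg] at hdd
        exact_mod_cast hdd
    have h3L : 0 < 3 * L := by omega
    have hle := Nat.le_of_dvd h3L hdvd3
    have := three_mul_lt L (by omega)
    omega

abbrev M2 (n : ℕ) := Matrix (Fin 2) (Fin 2) (ZMod n)

lemma castNe (n : ℕ) (a b : ℤ) (hne : a ≠ b) (hab : |a - b| < (n:ℤ))
    (hEq : ((a : ZMod n)) = (b : ZMod n)) : False := by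
  have h0 : ((a - b : ℤ) : ZMod n) = 0 := by push_cast; rw [hEq]; ring
  rw [ZMod.intCast_zmod_eq_zero_iff_dvd] at h0
  have h2 := Int.le_of_dvd (abs_pos.mpr (sub_ne_zero.mpr hne)) ((dvd_abs _ _).mpr h0)
  linarith

lemma φ_entry_ne {n : ℕ} (hn : 7 ≤ n) (M N : Matrix (Fin 2) (Fin 2) ℤ) (i j : Fin 2)
    (hne : M i j ≠ N i j) (hb : |M i j - N i j| < 7) : φn n M ≠ φn n N := by
  intro hEq
  have h1 : φn n M i j = φn n N i j := by rw [hEq]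
  rw [φn_apply, φn_apply] at h1
  have h7 : (7:ℤ) ≤ (n:ℤ) := by exact_mod_cast hn
  exact castNe n _ _ hne (by linarith) h1

lemma mul_AA' : intm Letter.A * intm Letter.A' = 1 := by
  simp [intm, Matrix.mul_fin_two, Matrix.one_fin_two]

lemma mul_A'A : intm Letter.A' * intm Letter.A = 1 := by
  simp [intm, Matrix.mul_fin_two, Matrix.one_fin_two]

def au (n : ℕ) : (M2 n)ˣ :=
  ⟨φn n (intm Letter.A), φn n (intm Letter.A'),
    by rw [← map_mul, mul_AA', map_one], by rw [← map_mul, mul_A'A, map_one]⟩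

def a'u (n : ℕ) : (M2 n)ˣ :=
  ⟨φn n (intm Letter.A'), φn n (intm Letter.A),
    by rw [← map_mul, mul_A'A, map_one], by rw [← map_mul, mul_AA', map_one]⟩

def bu (n : ℕ) : (M2 n)ˣ :=
  ⟨φn n (intm Letter.B), φn n (intm Letter.B),
    by rw [← map_mul, mul_BB, map_one], by rw [← map_mul, mul_BB, map_one]⟩

def fU (n : ℕ) : Letter → (M2 n)ˣ
  | Letter.A => au n
  | Letter.A' => a'u n
  | Letter.B => bu n

lemma fU_val (n : ℕ) (ℓ : Letter) : (fU n ℓ).val = φn n (intm ℓ) := by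
  cases ℓ <;> rfl

lemma mul_au_a'u (n : ℕ) : au n * a'u n = 1 := by
  apply Units.ext
  show φn n (intm Letter.A) * φn n (intm Letter.A') = 1
  rw [← map_mul, mul_AA', map_one]

lemma mul_a'u_au (n : ℕ) : a'u n * au n = 1 := by
  apply Units.ext
  show φn n (intm Letter.A') * φn n (intm Letter.A) = 1
  rw [← map_mul, mul_A'A, map_one]

lemma mul_bu_bu (n : ℕ) : bu n * bu n = 1 := by
  apply Units.ext
  show φn n (intm Letter.B) * φn n (intm Letter.B) = 1
  rw [← map_mul, mul_BB, map_one]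

lemma au_inv (n : ℕ) : (au n)⁻¹ = a'u n := inv_eq_of_mul_eq_one_right (mul_au_a'u n)

lemma a'u_inv (n : ℕ) : (a'u n)⁻¹ = au n := inv_eq_of_mul_eq_one_right (mul_a'u_au n)

lemma bu_inv (n : ℕ) : (bu n)⁻¹ = bu n := inv_eq_of_mul_eq_one_right (mul_bu_bu n)

lemma bad_mul {n : ℕ} {x y : Letter} (hxy : Bad x y) : fU n x * fU n y = 1 := by
  cases x <;> cases y <;> simp [Bad] at hxy <;>
    first
      | exact mul_au_a'u n
      | exact mul_a'u_au n
      | exact mul_bu_bu n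

def SS (n : ℕ) : Set (M2 n)ˣ := {au n, a'u n, bu n}

lemma mem_SS_iff {n : ℕ} {x : (M2 n)ˣ} : x ∈ SS n ↔ x = au n ∨ x = a'u n ∨ x = bu n := by
  simp [SS]

def GG (n : ℕ) : SimpleGraph (M2 n)ˣ where
  Adj v w := v ≠ w ∧ v⁻¹ * w ∈ SS n
  symm := by
    refine ⟨fun v w ⟨hne, hm⟩ => ?_⟩
    refine ⟨hne.symm, ?_⟩
    have hrw : w⁻¹ * v = (v⁻¹ * w)⁻¹ := by group
    rw [hrw]
    rcases mem_SS_iff.mp hm with hh | hh | hh <;> rw [hh]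
    · rw [au_inv]; exact Or.inr (Or.inl rfl)
    · rw [a'u_inv]; exact Or.inl rfl
    · rw [bu_inv]; exact Or.inr (Or.inr rfl)
  loopless := by
    refine ⟨fun v ⟨hne, _⟩ => ?_⟩
    exact hne rfl

lemma GG_adj {n : ℕ} {v w : (M2 n)ˣ} : (GG n).Adj v w ↔ v ≠ w ∧ v⁻¹ * w ∈ SS n := Iff.rfl

lemma au_ne_a'u {n : ℕ} (hn : 7 ≤ n) : au n ≠ a'u n := by
  intro hEq
  exact φ_entry_ne hn (intm Letter.A) (intm Letter.A') 0 1 (by simp [intm]) (by simp [intm])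
    (congrArg Units.val hEq)

lemma au_ne_bu {n : ℕ} (hn : 7 ≤ n) : au n ≠ bu n := by
  intro hEq
  exact φ_entry_ne hn (intm Letter.A) (intm Letter.B) 0 0 (by simp [intm]) (by simp [intm])
    (congrArg Units.val hEq)

lemma a'u_ne_bu {n : ℕ} (hn : 7 ≤ n) : a'u n ≠ bu n := by
  intro hEq
  exact φ_entry_ne hn (intm Letter.A') (intm Letter.B) 0 0 (by simp [intm]) (by simp [intm])
    (congrArg Units.val hEq)

lemma au_ne_one {n : ℕ} (hn : 7 ≤ n) : au n ≠ 1 := by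
  intro hEq
  refine φ_entry_ne hn (intm Letter.A) 1 0 1 (by simp [intm, Matrix.one_fin_two])
    (by simp [intm, Matrix.one_fin_two]) ?_
  rw [map_one]
  exact congrArg Units.val hEq

lemma a'u_ne_one {n : ℕ} (hn : 7 ≤ n) : a'u n ≠ 1 := by
  intro hEq
  refine φ_entry_ne hn (intm Letter.A') 1 0 1 (by simp [intm, Matrix.one_fin_two])
    (by simp [intm, Matrix.one_fin_two]) ?_
  rw [map_one]
  exact congrArg Units.val hEq

lemma bu_ne_one {n : ℕ} (hn : 7 ≤ n) : bu n ≠ 1 := by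
  intro hEq
  refine φ_entry_ne hn (intm Letter.B) 1 0 0 (by simp [intm, Matrix.one_fin_two])
    (by simp [intm, Matrix.one_fin_two]) ?_
  rw [map_one]
  exact congrArg Units.val hEq

lemma GG_neighborSet {n : ℕ} (hn : 7 ≤ n) (v : (M2 n)ˣ) :
    (GG n).neighborSet v = {v * au n, v * a'u n, v * bu n} := by
  ext w
  simp only [SimpleGraph.mem_neighborSet, GG_adj, Set.mem_insert_iff, Set.mem_singleton_iff]
  constructor
  · rintro ⟨hne, hm⟩
    rcases mem_SS_iff.mp hm with hh | hh | hh
    · exact Or.inl (by rw [← hh, mul_inv_cancel_left])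
    · exact Or.inr (Or.inl (by rw [← hh, mul_inv_cancel_left]))
    · exact Or.inr (Or.inr (by rw [← hh, mul_inv_cancel_left]))
  · rintro (rfl | rfl | rfl)
    · refine ⟨?_, by rw [inv_mul_cancel_left]; exact Or.inl rfl⟩
      intro hv
      exact au_ne_one hn (left_eq_mul.mp hv)
    · refine ⟨?_, by rw [inv_mul_cancel_left]; exact Or.inr (Or.inl rfl)⟩
      intro hv
      exact a'u_ne_one hn (left_eq_mul.mp hv)
    · refine ⟨?_, by rw [inv_mul_cancel_left]; exact Or.inr (Or.inr rfl)⟩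
      intro hv
      exact bu_ne_one hn (left_eq_mul.mp hv)


lemma walk_support_getElem? {V : Type*} {G : SimpleGraph V} {u v : V} (w : G.Walk u v) :
    ∀ i, i ≤ w.length → w.support[i]? = some (w.getVert i) := by
  induction w with
  | nil =>
    intro i hi
    have : i = 0 := by simpa using hi
    subst this
    simp [SimpleGraph.Walk.getVert_zero]
  | cons hadj p ih =>
    intro i hi
    cases i with
    | zero => simp [SimpleGraph.Walk.support_cons, SimpleGraph.Walk.getVert_zero]
    | succ k =>
      rw [SimpleGraph.Walk.support_cons, List.getElem?_cons_succ,
        SimpleGraph.Walk.getVert_cons_succ]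
      exact ih k (by simpa [SimpleGraph.Walk.length_cons] using hi)

lemma cyc_getVert_ne {V : Type*} {G : SimpleGraph V} {v : V} {w : G.Walk v v}
    (hw : w.IsCycle) {i j : ℕ} (h1i : 1 ≤ i) (hiL : i ≤ w.length) (h1j : 1 ≤ j)
    (hjL : j ≤ w.length) (hij : i ≠ j) : w.getVert i ≠ w.getVert j := by
  intro heq
  have e1 := walk_support_getElem? w i hiL
  have e2 := walk_support_getElem? w j hjL
  rw [SimpleGraph.Walk.support_eq_cons] at e1 e2
  obtain ⟨i', rfl⟩ : ∃ i', i = i' + 1 := ⟨i - 1, by omega⟩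
  obtain ⟨j', rfl⟩ : ∃ j', j = j' + 1 := ⟨j - 1, by omega⟩
  rw [List.getElem?_cons_succ] at e1 e2
  have hlen : w.support.tail.length = w.length := by
    have := SimpleGraph.Walk.length_support w
    simp only [List.length_tail, this]
    omega
  have hinj : i' = j' := List.getElem?_inj (i := i') (j := j') (l := w.support.tail)
    (by omega) hw.support_nodup |>.mp (by rw [e1, e2, heq])
  omega

end ErdosSachs

/-- (Erdős–Sachs) For every `h` there is a finite nonempty cubic (3-regular) simple
graph whose girth (as an extended natural number, `⊤` for acyclic graphs) is at
least `h`. -/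
theorem exists_cubic_graph_large_girth (h : ℕ) :
    ∃ (V : Type) (G : SimpleGraph V), Finite V ∧ Nonempty V ∧
      (∀ v : V, (G.neighborSet v).ncard = 3) ∧ (h : ℕ∞) ≤ G.egirth := by
  classical
  open ErdosSachs in
  set n := 4 ^ h + 7 with hn7
  have hpow : 0 < 4 ^ h := pow_pos (by norm_num) h
  have hn : 7 ≤ n := by omega
  haveI : NeZero n := ⟨by omega⟩
  haveI hfin : Finite ((M2 n)ˣ) := by
    haveI : Finite (M2 n) := by infer_instance
    exact Finite.of_injective (fun u : (M2 n)ˣ => ((u : M2 n), ((u⁻¹ : (M2 n)ˣ) : M2 n)))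
      (fun a b hab => by
        apply Units.ext
        exact congrArg Prod.fst hab)
  refine ⟨(M2 n)ˣ, GG n, hfin, ⟨1⟩, ?_, ?_⟩
  · -- degree 3
    intro v
    rw [GG_neighborSet hn v]
    have d12 : v * au n ≠ v * a'u n := by
      simp only [ne_eq, mul_right_inj]
      exact au_ne_a'u hn
    have d13 : v * au n ≠ v * bu n := by
      simp only [ne_eq, mul_right_inj]
      exact au_ne_bu hn
    have d23 : v * a'u n ≠ v * bu n := by
      simp only [ne_eq, mul_right_inj]
      exact a'u_ne_bu hn
    rw [Set.ncard_insert_of_notMem (by simp [d12, d13]), Set.ncard_pair d23]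
  · -- girth
    rw [SimpleGraph.le_egirth]
    intro a w hw
    by_contra hlt
    push_neg at hlt
    have hLh : w.length < h := by exact_mod_cast hlt
    set L := w.length with hLdef
    have hL3 : 3 ≤ L := hw.three_le_length
    have h4L : 4 ^ L < n := by
      have : (4:ℕ) ^ L < 4 ^ h := Nat.pow_lt_pow_right (by norm_num) hLh
      omega
    have hv0 : w.getVert 0 = a := SimpleGraph.Walk.getVert_zero w
    have hvL : w.getVert L = a := SimpleGraph.Walk.getVert_length w
    set s : ℕ → (M2 n)ˣ := fun j => (w.getVert j)⁻¹ * w.getVert (j + 1) with hs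
    have hmem : ∀ j, j < L → s j ∈ SS n := by
      intro j hj
      exact ((w.adj_getVert_succ hj : (GG n).Adj _ _)).2
    set letter : ℕ → Letter := fun j =>
      if s j = au n then Letter.A else if s j = a'u n then Letter.A' else Letter.B with hlet
    have hfUs : ∀ j, j < L → fU n (letter j) = s j := by
      intro j hj
      by_cases h1 : s j = au n
      · simp [hlet, h1, fU]
      · by_cases h2 : s j = a'u n
        · simp [hlet, h1, h2, fU, (au_ne_a'u hn).symm]
        · have h3 := hmem j hj
          rcases mem_SS_iff.mp h3 with hh | hh | hh
          · exact absurd hh h1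
          · exact absurd hh h2
          · simp [hlet, h1, h2, fU, hh, (au_ne_bu hn).symm, (a'u_ne_bu hn).symm]
    set c : ℕ → Letter := fun i => letter (i % L) with hc
    have hper : ∀ i, c (i + L) = c i := by
      intro i
      simp only [hc, Nat.add_mod_right]
    have hLpos : 0 < L := by omega
    -- cyclic reducedness
    have hred : ∀ i, ¬ Bad (c i) (c (i + 1)) := by
      intro i hBadH
      have hjL : i % L < L := Nat.mod_lt _ hLpos
      set j := i % L with hj
      have hci : c i = letter j := rfl
      have hci1 : c (i + 1) = letter ((j + 1) % L) := by
        simp only [hc]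
        congr 1
        rw [Nat.add_mod, hj, Nat.mod_eq_of_lt (show 1 < L by omega)]
      rw [hci, hci1] at hBadH
      have hmul := bad_mul (n := n) hBadH
      by_cases hcase : j + 1 < L
      · rw [Nat.mod_eq_of_lt hcase] at hmul
        rw [hfUs j (by omega), hfUs (j + 1) hcase] at hmul
        have h1 : (w.getVert j)⁻¹ * w.getVert (j + 2) = 1 := by
          have : (w.getVert j)⁻¹ * w.getVert (j + 1) *
              ((w.getVert (j + 1))⁻¹ * w.getVert (j + 1 + 1)) = 1 := hmul
          rw [show j + 1 + 1 = j + 2 by ring] at this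
          rwa [mul_assoc, mul_inv_cancel_left] at this
        have heq : w.getVert j = w.getVert (j + 2) := by
          rwa [inv_mul_eq_one] at h1
        by_cases hj0 : j = 0
        · rw [hj0] at heq
          have heq2 : w.getVert L = w.getVert 2 := hvL.trans (hv0.symm.trans heq)
          exact cyc_getVert_ne hw (by omega) le_rfl (by omega) (by omega) (by omega) heq2
        · exact cyc_getVert_ne hw (by omega) (by omega) (by omega) (by omega) (by omega) heq
      · have hjL1 : j + 1 = L := by omega
        have hmod : (j + 1) % L = 0 := by rw [hjL1, Nat.mod_self]
        rw [hmod] at hmul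
        rw [hfUs j (by omega), hfUs 0 (by omega)] at hmul
        have h1 : (w.getVert j)⁻¹ * w.getVert 1 = 1 := by
          have : (w.getVert j)⁻¹ * w.getVert (j + 1) *
              ((w.getVert 0)⁻¹ * w.getVert (0 + 1)) = 1 := hmul
          rw [hjL1, hvL, hv0] at this
          simpa [mul_assoc] using this
        have heq : w.getVert j = w.getVert 1 := by rwa [inv_mul_eq_one] at h1
        exact cyc_getVert_ne hw (by omega) (by omega) (by omega) (by omega) (by omega) heq
    -- telescoping product
    have tele : ∀ k, k ≤ L →
        ((List.range k).map (fun j => fU n (c j))).prod = (w.getVert 0)⁻¹ * w.getVert k := by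
      intro k
      induction k with
      | zero => intro _; simp
      | succ m ih =>
        intro hm
        rw [List.range_succ, List.map_append, List.prod_append, ih (by omega)]
        have hcm : c m = letter m := by
          simp only [hc]
          rw [Nat.mod_eq_of_lt (by omega)]
        simp only [List.map_cons, List.map_nil, List.prod_cons, List.prod_nil, mul_one]
        rw [hcm, hfUs m (by omega), hs]
        rw [mul_assoc, mul_inv_cancel_left]
    have hunits : ((List.range L).map (fun j => fU n (c j))).prod = 1 := by
      rw [tele L le_rfl, hv0, hvL, inv_mul_cancel]
    have hprodm : φn n (((List.range L).map (fun j => intm (c j))).prod) = 1 := by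
      have hval : (((List.range L).map (fun j => fU n (c j))).map (Units.coeHom (M2 n))).prod
          = 1 := by
        rw [← map_list_prod (Units.coeHom (M2 n)), hunits, map_one]
      rw [List.map_map] at hval
      have hmapeq : (List.range L).map ((Units.coeHom (M2 n)) ∘ fun j => fU n (c j)) =
          (List.range L).map (fun j => φn n (intm (c j))) := by
        apply List.map_congr_left
        intro j _
        simp only [Function.comp_apply, Units.coeHom_apply]
        exact fU_val n (c j)
      rw [hmapeq] at hval
      rw [map_list_prod (φn n), List.map_map]
      exact hval
    exact (core n L hL3 h4L c hper hred hprodm).elim
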